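/- Let M be a set of quadratic monomials over X and define M' = { xy : x ≠ y, xy ∈ M } ∪ { x²y : x ≠ y, x² ∈ M and xy ∉ M }. Then a linear order on X is cool for M if and only if it is cool for M'. -/

import Mathlib

variable {X : Type*}

/-- A letter is extremal in a monomial (w.r.t. the linear order `r`) if it is the
least or greatest letter of its support. -/
def ExtremalO (r : LinearOrder X) (w : X →₀ ℕ) (x : X) : Prop :=
  x ∈ w.support ∧ ((∀ y ∈ w.support, r.le x y) ∨ (∀ y ∈ w.support, r.le y x))

/-- A letter is internal to a monomial (w.r.t. the linear order `r`) if it lies strictly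
between its extremal letters. -/
def InternalO (r : LinearOrder X) (w : X →₀ ℕ) (x : X) : Prop :=
  (∃ a ∈ w.support, r.lt a x) ∧ (∃ b ∈ w.support, r.lt x b)

/-- A linear order `r` on the letters is cool for a set `M` of monomials if for every
`w ∈ M` and letter `x` internal to `w` there is `s ∈ M` with `x` extremal in `s` and
`s/x` dividing `w`. -/
def Cool (r : LinearOrder X) (M : Set (X →₀ ℕ)) : Prop :=
  ∀ w ∈ M, ∀ x : X, InternalO r w x → ∃ s ∈ M, ExtremalO r s x ∧ Finsupp.erase x s ≤ w

/-- A set of monomials is an antichain if no member divides another. -/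
def IsMonAntichain (M : Set (X →₀ ℕ)) : Prop := ∀ u ∈ M, ∀ v ∈ M, u ≤ v → u = v

/-- The quadratic monomial `xy` (which is `x²` when `x = y`). -/
noncomputable def quadMon (x y : X) : X →₀ ℕ := Finsupp.single x 1 + Finsupp.single y 1

lemma quadMon_self (x : X) : quadMon x x = Finsupp.single x 2 := by
  rw [quadMon, ← Finsupp.single_add]

lemma mem_support_pair {x z : X} (h : x ≠ z) {n m : ℕ} (hn : n ≠ 0) (hm : m ≠ 0) (a : X) :
    a ∈ (Finsupp.single x n + Finsupp.single z m).support ↔ a = x ∨ a = z := by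
  classical
  rw [Finsupp.mem_support_iff, Finsupp.add_apply, Finsupp.single_apply, Finsupp.single_apply]
  by_cases h1 : x = a
  · subst h1
    rw [if_pos rfl, if_neg (Ne.symm h)]
    simp [hn]
  · rw [if_neg h1, zero_add]
    by_cases h2 : z = a
    · subst h2
      rw [if_pos rfl]
      simp [hm]
    · rw [if_neg h2]
      simp [Ne.symm h1, Ne.symm h2]

lemma mem_support_quadMon {x z : X} (h : x ≠ z) (a : X) :
    a ∈ (quadMon x z).support ↔ a = x ∨ a = z :=
  mem_support_pair h one_ne_zero one_ne_zero a

lemma deg2_eq_quadMon {m : X →₀ ℕ} (hm : (m.sum fun _ e => e) = 2) {x y : X} (hxy : x ≠ y)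
    (hx : x ∈ m.support) (hy : y ∈ m.support) : m = quadMon x y := by
  classical
  have hsub : ({x, y} : Finset X) ⊆ m.support := by
    intro a ha; rcases Finset.mem_insert.1 ha with rfl | ha
    · exact hx
    · rwa [Finset.mem_singleton.1 ha]
  have hsum : ∑ a ∈ ({x, y} : Finset X), m a ≤ 2 := by
    rw [← hm, Finsupp.sum]
    exact Finset.sum_le_sum_of_subset hsub
  rw [Finset.sum_pair hxy] at hsum
  have hx1 : 1 ≤ m x := Nat.one_le_iff_ne_zero.2 (Finsupp.mem_support_iff.1 hx)
  have hy1 : 1 ≤ m y := Nat.one_le_iff_ne_zero.2 (Finsupp.mem_support_iff.1 hy)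
  have hmx : m x = 1 := by omega
  have hmy : m y = 1 := by omega
  ext a
  rcases eq_or_ne a x with rfl | hax
  · simp [quadMon, Finsupp.single_apply, hmx, Ne.symm hxy]
  rcases eq_or_ne a y with rfl | hay
  · simp [quadMon, Finsupp.single_apply, hmy, hxy]
  by_cases ha : a ∈ m.support
  · exfalso
    have hsub3 : ({x, y, a} : Finset X) ⊆ m.support := by
      intro b hb
      rcases Finset.mem_insert.1 hb with rfl | hb
      · exact hx
      rcases Finset.mem_insert.1 hb with rfl | hb
      · exact hy
      · rwa [Finset.mem_singleton.1 hb]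
    have hsum3 : ∑ b ∈ ({x, y, a} : Finset X), m b ≤ 2 := by
      rw [← hm, Finsupp.sum]
      exact Finset.sum_le_sum_of_subset hsub3
    have ha1 : 1 ≤ m a := Nat.one_le_iff_ne_zero.2 (Finsupp.mem_support_iff.1 ha)
    rw [Finset.sum_insert (by simp [hxy, hax.symm]),
      Finset.sum_pair (fun h => hay h.symm : y ≠ a)] at hsum3
    omega
  · have h0 : m a = 0 := Finsupp.notMem_support_iff.1 ha
    simp [quadMon, Finsupp.single_apply, h0, Ne.symm hax, Ne.symm hay]

lemma deg2_cases {s : X →₀ ℕ} (hs : (s.sum fun _ e => e) = 2) {x : X}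
    (hx : x ∈ s.support) : s = Finsupp.single x 2 ∨ ∃ v, v ≠ x ∧ s = quadMon x v := by
  classical
  by_cases h : ∃ v ∈ s.support, v ≠ x
  · obtain ⟨v, hv, hvx⟩ := h
    exact Or.inr ⟨v, hvx, deg2_eq_quadMon hs (Ne.symm hvx) hx hv⟩
  · push_neg at h
    left
    have hsupp : s.support = {x} := Finset.eq_singleton_iff_unique_mem.2 ⟨hx, h⟩
    have hsx : s x = 2 := by
      rw [← hs, Finsupp.sum, hsupp, Finset.sum_singleton]
    ext a
    rcases eq_or_ne a x with rfl | hax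
    · simp [hsx, Finsupp.single_apply]
    · have : a ∉ s.support := by rw [hsupp]; simp [hax]
      simp [Finsupp.notMem_support_iff.1 this, Finsupp.single_apply, Ne.symm hax]

lemma extremal_of_pair (r : LinearOrder X) {s : X →₀ ℕ} {x z : X}
    (hs : ∀ a, a ∈ s.support ↔ a = x ∨ a = z) : ExtremalO r s x := by
  refine ⟨(hs x).2 (Or.inl rfl), ?_⟩
  rcases r.le_total x z with h | h
  · left; intro y hy; rcases (hs y).1 hy with rfl | rfl
    · exact r.le_refl _
    · exact h
  · right; intro y hy; rcases (hs y).1 hy with rfl | rfl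
    · exact r.le_refl _
    · exact h

lemma erase_pair {x z : X} (h : x ≠ z) (n m : ℕ) :
    Finsupp.erase x (Finsupp.single x n + Finsupp.single z m) = Finsupp.single z m := by
  rw [Finsupp.erase_add, Finsupp.erase_single, Finsupp.erase_single_ne h, zero_add]

lemma erase_pair' {x z : X} (h : x ≠ z) (n m : ℕ) :
    Finsupp.erase x (Finsupp.single z n + Finsupp.single x m) = Finsupp.single z n := by
  rw [Finsupp.erase_add, Finsupp.erase_single, Finsupp.erase_single_ne h, add_zero]

lemma erase_quadMon {x z : X} (h : x ≠ z) :
    Finsupp.erase x (quadMon z x) = Finsupp.single z 1 :=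
  erase_pair' h 1 1

/-- Replacing each pure square `x²` of a quadratic set `M` by the monomials `x²y` with
`xy ∉ M` preserves the cool orders. -/
theorem stmt15 (M : Set (X →₀ ℕ)) (hq : ∀ m ∈ M, (m.sum fun _ e => e) = 2)
    (r : LinearOrder X) :
    Cool r M ↔
      Cool r ({w | ∃ x y : X, x ≠ y ∧ quadMon x y ∈ M ∧ w = quadMon x y} ∪
        {w | ∃ x y : X, x ≠ y ∧ quadMon x x ∈ M ∧ quadMon x y ∉ M ∧
          w = Finsupp.single x 2 + Finsupp.single y 1}) := by
  classical
  letI : LinearOrder X := r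
  constructor
  · intro hM w hw x hx
    rcases hw with ⟨a, b, hab, haM, rfl⟩ | ⟨a, b, hab, haM, hnab, rfl⟩
    · -- w = quadMon a b ∈ M
      obtain ⟨s, hsM, hsx, hse⟩ := hM _ haM x hx
      rcases deg2_cases (hq s hsM) hsx.1 with rfl | ⟨v, hvx, rfl⟩
      · -- s = x², x² ∈ M
        obtain ⟨⟨c, hc, hcx⟩, -⟩ := hx
        have hxc : x ≠ c := (ne_of_lt hcx).symm
        have hcw : Finsupp.single c 1 ≤ quadMon a b :=
          Finsupp.single_le_iff.2 (Nat.one_le_iff_ne_zero.2 (Finsupp.mem_support_iff.1 hc))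
        by_cases hM2 : quadMon x c ∈ M
        · refine ⟨quadMon x c, Or.inl ⟨x, c, hxc, hM2, rfl⟩,
            extremal_of_pair r (mem_support_quadMon hxc), ?_⟩
          rw [show quadMon x c = quadMon c x from add_comm _ _, erase_quadMon hxc]
          exact hcw
        · refine ⟨Finsupp.single x 2 + Finsupp.single c 1,
            Or.inr ⟨x, c, hxc, by rwa [quadMon_self], hM2, rfl⟩,
            extremal_of_pair r (mem_support_pair hxc two_ne_zero one_ne_zero), ?_⟩
          rw [erase_pair hxc]
          exact hcw
      · -- s = quadMon x v ∈ M
        exact ⟨quadMon x v, Or.inl ⟨x, v, Ne.symm hvx, hsM, rfl⟩, hsx, hse⟩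
    · -- w = a²b, a² ∈ M, ab ∉ M
      obtain ⟨⟨c, hc, hcx⟩, ⟨d, hd, hxd⟩⟩ := hx
      have hxa : x ≠ a := by
        rintro rfl
        rcases (mem_support_pair hab two_ne_zero one_ne_zero c).1 hc with rfl | rfl
        · exact lt_irrefl _ hcx
        · rcases (mem_support_pair hab two_ne_zero one_ne_zero d).1 hd with rfl | rfl
          · exact lt_irrefl _ hxd
          · exact lt_irrefl _ (lt_trans hcx hxd)
      have haw : Finsupp.single a 1 ≤ Finsupp.single a 2 + Finsupp.single b 1 :=
        le_trans (Finsupp.single_le_iff.2 (by simp)) le_self_add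
      by_cases hM2 : quadMon a x ∈ M
      · refine ⟨quadMon a x, Or.inl ⟨a, x, Ne.symm hxa, hM2, rfl⟩,
          extremal_of_pair r (fun y => by
            rw [mem_support_quadMon (Ne.symm hxa) y]; tauto), ?_⟩
        rw [erase_quadMon hxa]
        exact haw
      · refine ⟨Finsupp.single a 2 + Finsupp.single x 1,
          Or.inr ⟨a, x, Ne.symm hxa, haM, hM2, rfl⟩,
          extremal_of_pair r (fun y => by
            rw [mem_support_pair (Ne.symm hxa) two_ne_zero one_ne_zero y]; tauto), ?_⟩
        rw [erase_pair' hxa]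
        exact le_self_add
  · intro hM' w hw x hx
    obtain ⟨⟨c, hc, hcx⟩, ⟨d, hd, hxd⟩⟩ := hx
    have hcd : c ≠ d := ne_of_lt (lt_trans hcx hxd)
    have hw2 : w = quadMon c d := deg2_eq_quadMon (hq w hw) hcd hc hd
    subst hw2
    obtain ⟨s, hsS, hsx, hse⟩ := hM' _ (Or.inl ⟨c, d, hcd, hw, rfl⟩) x
      ⟨⟨c, hc, hcx⟩, ⟨d, hd, hxd⟩⟩
    rcases hsS with ⟨u, v, huv, huvM, rfl⟩ | ⟨u, v, huv, hu2M, hnuv, rfl⟩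
    · exact ⟨quadMon u v, huvM, hsx, hse⟩
    · rcases (mem_support_pair huv two_ne_zero one_ne_zero x).1 hsx.1 with hxu | hxv
      · subst hxu
        refine ⟨Finsupp.single x 2, by rwa [quadMon_self] at hu2M, ?_, ?_⟩
        · refine ⟨?_, Or.inl fun y hy => ?_⟩
          · rw [Finsupp.support_single_ne_zero _ two_ne_zero]
            exact Finset.mem_singleton_self x
          · rw [Finsupp.support_single_ne_zero _ two_ne_zero] at hy
            rw [Finset.mem_singleton.1 hy]
        · rw [Finsupp.erase_single]
          exact zero_le
      · exfalso
        subst hxv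
        rw [erase_pair' (Ne.symm huv)] at hse
        have h2 : (2 : ℕ) ≤ quadMon c d u := Finsupp.single_le_iff.1 hse
        rw [quadMon, Finsupp.add_apply, Finsupp.single_apply, Finsupp.single_apply] at h2
        rcases eq_or_ne c u with rfl | h1
        · rw [if_pos rfl, if_neg (fun h : d = c => hcd h.symm)] at h2
          omega
        · rw [if_neg h1] at h2
          split_ifs at h2 <;> omega
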